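/- arXiv:2201.00154 — 6 statements merged into one kernel-verified Lean document; each statement's English description precedes it below -/
import Mathlib

section
/- Let G be an indecomposable symmetric real n×n matrix with all diagonal entries equal to 1 and all off-diagonal entries ≤ 0. If G is positive semidefinite but not positive definite, then the kernel of G is one-dimensional, and every proper principal submatrix of G is positive definite. -/
open Matrix

private lemma psd_dot_zero {n : ℕ} {G : Matrix (Fin n) (Fin n) ℝ} (hpsd : G.PosSemidef)
    {x : Fin n → ℝ} (h : x ⬝ᵥ G.mulVec x = 0) : G.mulVec x = 0 := by
  apply (hpsd.dotProduct_mulVec_zero_iff x).mp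
  rwa [star_trivial]

/-- Full support of kernel vectors. -/
private lemma full_support {n : ℕ} {G : Matrix (Fin n) (Fin n) ℝ}
    (hsymm : G.IsSymm)
    (hdiag : ∀ i, G i i = 1)
    (hoff : ∀ i j, i ≠ j → G i j ≤ 0)
    (hindec : ∀ S : Finset (Fin n), S.Nonempty → S ≠ Finset.univ →
      ∃ i ∈ S, ∃ j ∉ S, G i j ≠ 0)
    (hpsd : G.PosSemidef)
    {v : Fin n → ℝ} (hv : G.mulVec v = 0) (hvne : v ≠ 0) : ∀ i, v i ≠ 0 := by
  set u : Fin n → ℝ := fun i => |v i| with hu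
  -- quadratic form of u is ≤ that of v, which is 0
  have hqv : v ⬝ᵥ G.mulVec v = 0 := by rw [hv, dotProduct_zero]
  have hle : u ⬝ᵥ G.mulVec u ≤ v ⬝ᵥ G.mulVec v := by
    simp only [dotProduct, mulVec, Finset.mul_sum]
    apply Finset.sum_le_sum
    intro i _
    apply Finset.sum_le_sum
    intro j _
    rcases eq_or_ne i j with rfl | hij
    · simp [hu, hdiag i, mul_comm, abs_mul_abs_self]
    · have h1 : G i j ≤ 0 := hoff i j hij
      have h2 : v i * v j ≤ u i * u j := by
        calc v i * v j ≤ |v i * v j| := le_abs_self _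
        _ = u i * u j := abs_mul _ _
      calc u i * (G i j * u j) = G i j * (u i * u j) := by ring
        _ ≤ G i j * (v i * v j) := mul_le_mul_of_nonpos_left h2 h1
        _ = v i * (G i j * v j) := by ring
  have hge : 0 ≤ u ⬝ᵥ G.mulVec u := by
    have := hpsd.dotProduct_mulVec_nonneg u
    rwa [star_trivial] at this
  have hqu : u ⬝ᵥ G.mulVec u = 0 := le_antisymm (hqv ▸ hle) hge
  have hku : G.mulVec u = 0 := psd_dot_zero hpsd hqu
  -- support set
  set S : Finset (Fin n) := Finset.univ.filter (fun i => v i ≠ 0) with hS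
  have hmem : ∀ i, i ∈ S ↔ v i ≠ 0 := by intro i; simp [hS]
  have hSne : S.Nonempty := by
    obtain ⟨i, hi⟩ := Function.ne_iff.mp hvne
    exact ⟨i, (hmem i).mpr hi⟩
  have hSuniv : S = Finset.univ := by
    by_contra hne
    obtain ⟨i, hiS, j, hjS, hij⟩ := hindec S hSne hne
    have hvj : v j = 0 := by simpa using (hmem j).not.mp hjS
    have huj : u j = 0 := by simp [hu, hvj]
    have hsum : ∑ k, G j k * u k = 0 := congrFun hku j
    have hterm : ∀ k ∈ Finset.univ, G j k * u k ≤ 0 := by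
      intro k _
      rcases eq_or_ne j k with rfl | hjk
      · simp [huj]
      · exact mul_nonpos_of_nonpos_of_nonneg (hoff j k hjk) (abs_nonneg _)
    have hall := (Finset.sum_eq_zero_iff_of_nonpos hterm).mp hsum
    have hji : G j i * u i = 0 := hall i (Finset.mem_univ i)
    have hui : u i ≠ 0 := by
      have := (hmem i).mp hiS
      simpa [hu] using this
    have : G j i = 0 := by
      rcases mul_eq_zero.mp hji with h | h
      · exact h
      · exact absurd h hui
    exact hij ((hsymm.apply j i).trans this)
  intro i
  exact (hmem i).mp (hSuniv ▸ Finset.mem_univ i)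

/-- An indecomposable symmetric matrix with unit diagonal and nonpositive off-diagonal
entries which is positive semidefinite but not positive definite has one-dimensional
kernel, and all its proper principal submatrices are positive definite. -/
theorem parabolic_gram_matrix
    (n : ℕ) (G : Matrix (Fin n) (Fin n) ℝ)
    (hsymm : G.IsSymm)
    (hdiag : ∀ i, G i i = 1)
    (hoff : ∀ i j, i ≠ j → G i j ≤ 0)
    (hindec : ∀ S : Finset (Fin n), S.Nonempty → S ≠ Finset.univ →
      ∃ i ∈ S, ∃ j ∉ S, G i j ≠ 0)
    (hpsd : G.PosSemidef) (hnpd : ¬ G.PosDef) :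
    (∃ v : Fin n → ℝ, v ≠ 0 ∧ G.mulVec v = 0 ∧
      ∀ w : Fin n → ℝ, G.mulVec w = 0 → ∃ c : ℝ, w = c • v) ∧
    (∀ S : Finset (Fin n), S ≠ Finset.univ →
      (G.submatrix (fun i : ↥S => (i : Fin n)) (fun i : ↥S => (i : Fin n))).PosDef) := by
  -- n > 0
  have hn : 0 < n := by
    rcases Nat.eq_zero_or_pos n with rfl | h
    · exact absurd ⟨hpsd.1, fun x hx => absurd (Subsingleton.elim x 0) hx⟩ hnpd
    · exact h
  -- a nonzero kernel vector
  obtain ⟨v, hvne, hvker⟩ : ∃ v : Fin n → ℝ, v ≠ 0 ∧ G.mulVec v = 0 := by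
    rw [Matrix.posDef_iff_dotProduct_mulVec] at hnpd
    push_neg at hnpd
    obtain ⟨x, hxne, hx⟩ := hnpd hpsd.1
    have h0 : x ⬝ᵥ G.mulVec x = 0 := by
      have h1 := hpsd.dotProduct_mulVec_nonneg x
      rw [star_trivial] at h1 hx
      linarith
    exact ⟨x, hxne, psd_dot_zero hpsd h0⟩
  have hfull := full_support hsymm hdiag hoff hindec hpsd hvker hvne
  set i₀ : Fin n := ⟨0, hn⟩
  constructor
  · refine ⟨v, hvne, hvker, fun w hw => ?_⟩
    refine ⟨w i₀ / v i₀, ?_⟩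
    by_contra hne
    have hker : G.mulVec (w - (w i₀ / v i₀) • v) = 0 := by
      rw [mulVec_sub, mulVec_smul, hw, hvker, smul_zero, sub_zero]
    have hne' : w - (w i₀ / v i₀) • v ≠ 0 := sub_ne_zero.mpr hne
    have := full_support hsymm hdiag hoff hindec hpsd hker hne' i₀
    apply this
    simp only [Pi.sub_apply, Pi.smul_apply, smul_eq_mul]
    rw [div_mul_cancel₀ _ (hfull i₀), sub_self]
  · intro S hSne
    obtain ⟨j₀, hj₀⟩ : ∃ j, j ∉ S := by
      by_contra h
      push_neg at h
      exact hSne (Finset.eq_univ_iff_forall.mpr h)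
    refine Matrix.PosDef.of_dotProduct_mulVec_pos (hpsd.1.submatrix _) (fun x hxne => ?_)
    rw [star_trivial]
    -- extend x by zero
    set w : Fin n → ℝ := fun i => if h : i ∈ S then x ⟨i, h⟩ else 0 with hwdef
    have hwS : ∀ a : ↥S, w ↑a = x a := by
      intro a; simp [hwdef, a.2]
    have hw0 : ∀ i, i ∉ S → w i = 0 := by
      intro i hi; simp [hwdef, hi]
    have hqeq : x ⬝ᵥ (G.submatrix (fun i : ↥S => (i : Fin n)) (fun i : ↥S => (i : Fin n))).mulVec x
        = w ⬝ᵥ G.mulVec w := by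
      simp only [dotProduct, mulVec, submatrix_apply]
      have hinner : ∀ i : Fin n, (∑ j, G i j * w j) = ∑ b : ↥S, G i ↑b * x b := by
        intro i
        rw [show (∑ b : ↥S, G i ↑b * x b) = ∑ b : ↥S, G i ↑b * w ↑b from
          Finset.sum_congr rfl (fun b _ => by rw [hwS])]
        rw [Finset.sum_coe_sort S (fun j => G i j * w j)]
        symm
        apply Finset.sum_subset (Finset.subset_univ S)
        intro k _ hk
        rw [hw0 k hk, mul_zero]
      calc (∑ a : ↥S, x a * ∑ b : ↥S, G ↑a ↑b * x b)
          = ∑ a : ↥S, w ↑a * ∑ j, G ↑a j * w j := by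
            refine Finset.sum_congr rfl (fun a _ => ?_)
            rw [hwS, hinner]
        _ = ∑ i ∈ S, w i * ∑ j, G i j * w j :=
            Finset.sum_coe_sort S (fun i => w i * ∑ j, G i j * w j)
        _ = ∑ i, w i * ∑ j, G i j * w j := by
            apply Finset.sum_subset (Finset.subset_univ S)
            intro k _ hk
            rw [hw0 k hk, zero_mul]
    have hge : 0 ≤ w ⬝ᵥ G.mulVec w := by
      have := hpsd.dotProduct_mulVec_nonneg w; rwa [star_trivial] at this
    rw [hqeq]
    rcases hge.lt_or_eq with h | h
    · exact h
    · exfalso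
      have hker : G.mulVec w = 0 := psd_dot_zero hpsd h.symm
      have hwne : w ≠ 0 := by
        obtain ⟨a, ha⟩ := Function.ne_iff.mp hxne
        intro h0
        apply ha
        rw [← hwS a, h0]; rfl
      have := full_support hsymm hdiag hoff hindec hpsd hker hwne j₀
      exact this (hw0 j₀ hj₀)
end

section
/- The 3×3 matrix G with diagonal entries 1, G_{12} = G_{21} = -cos(π/k), G_{13} = G_{31} = -cos(π/l), G_{23} = G_{32} = -cos(π/m), where k, l, m ≥ 2 are integers, is positive definite if and only if 1/k + 1/l + 1/m > 1. -/
open Matrix Real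

lemma cos_facts {x : ℝ} (h1 : 0 < x) (h2 : x ≤ π / 2) :
    0 ≤ Real.cos x ∧ Real.cos x < 1 := by
  constructor
  · exact Real.cos_nonneg_of_mem_Icc ⟨by linarith, h2⟩
  · have := Real.strictAntiOn_cos (Set.mem_Icc.2 ⟨le_refl 0, Real.pi_pos.le⟩)
      (Set.mem_Icc.2 ⟨h1.le, by linarith [Real.pi_pos]⟩) h1
    simpa using this

lemma key_trig {α β γ : ℝ} (hα : 0 < α) (hα2 : α ≤ π / 2) (hβ : 0 < β) (hβ2 : β ≤ π / 2)
    (hγ : 0 < γ) (hγ2 : γ ≤ π / 2) :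
    (0 < 1 - Real.cos α ^ 2 - Real.cos β ^ 2 - Real.cos γ ^ 2
        - 2 * Real.cos α * Real.cos β * Real.cos γ) ↔ π < α + β + γ := by
  obtain ⟨ha0, ha1⟩ := cos_facts hα hα2
  obtain ⟨hb0, hb1⟩ := cos_facts hβ hβ2
  obtain ⟨hc0, hc1⟩ := cos_facts hγ hγ2
  have hsa : 0 < Real.sin α := Real.sin_pos_of_pos_of_lt_pi hα (by linarith [Real.pi_pos])
  have hsb : 0 < Real.sin β := Real.sin_pos_of_pos_of_lt_pi hβ (by linarith [Real.pi_pos])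
  have hid : 1 - Real.cos α ^ 2 - Real.cos β ^ 2 - Real.cos γ ^ 2
        - 2 * Real.cos α * Real.cos β * Real.cos γ
      = (Real.sin α * Real.sin β) ^ 2 - (Real.cos γ + Real.cos α * Real.cos β) ^ 2 := by
    have h1 : Real.sin α ^ 2 = 1 - Real.cos α ^ 2 := Real.sin_sq α
    have h2 : Real.sin β ^ 2 = 1 - Real.cos β ^ 2 := Real.sin_sq β
    nlinarith [h1, h2]
  rw [hid]
  have step1 : (0 < (Real.sin α * Real.sin β) ^ 2
        - (Real.cos γ + Real.cos α * Real.cos β) ^ 2)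
      ↔ Real.cos γ + Real.cos α * Real.cos β < Real.sin α * Real.sin β := by
    have hY : 0 ≤ Real.cos γ + Real.cos α * Real.cos β :=
      add_nonneg hc0 (mul_nonneg ha0 hb0)
    have hX : 0 < Real.sin α * Real.sin β := mul_pos hsa hsb
    constructor
    · intro h
      nlinarith [h, hY, hX]
    · intro h
      nlinarith [mul_pos (show (0:ℝ) < Real.sin α * Real.sin β - (Real.cos γ + Real.cos α * Real.cos β) by linarith) (show (0:ℝ) < Real.sin α * Real.sin β + (Real.cos γ + Real.cos α * Real.cos β) by linarith)]
  rw [step1]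
  have hcos : Real.sin α * Real.sin β - Real.cos α * Real.cos β = Real.cos (π - (α + β)) := by
    rw [Real.cos_pi_sub, Real.cos_add]; ring
  have h2 : (Real.cos γ + Real.cos α * Real.cos β < Real.sin α * Real.sin β)
      ↔ Real.cos γ < Real.cos (π - (α + β)) := by rw [← hcos]; constructor <;> intro <;> linarith
  rw [h2]
  have hm1 : π - (α + β) ∈ Set.Icc 0 π := ⟨by linarith, by linarith⟩
  have hm2 : γ ∈ Set.Icc 0 π := ⟨hγ.le, by linarith [Real.pi_pos]⟩
  rw [Real.strictAntiOn_cos.lt_iff_gt hm2 hm1]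
  constructor <;> intro <;> linarith

lemma quad_pos {a b c x0 x1 x2 : ℝ} (ha2 : 0 < 1 - a ^ 2)
    (hD : 0 < 1 - a ^ 2 - b ^ 2 - c ^ 2 - 2 * a * b * c)
    (hx : ¬ (x0 = 0 ∧ x1 = 0 ∧ x2 = 0)) :
    0 < x0 ^ 2 + x1 ^ 2 + x2 ^ 2 - 2 * a * x0 * x1 - 2 * b * x0 * x2 - 2 * c * x1 * x2 := by
  have key : (1 - a ^ 2) * (x0 ^ 2 + x1 ^ 2 + x2 ^ 2 - 2 * a * x0 * x1
        - 2 * b * x0 * x2 - 2 * c * x1 * x2)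
      = (1 - a ^ 2) * (x0 - a * x1 - b * x2) ^ 2
        + ((1 - a ^ 2) * x1 - (c + a * b) * x2) ^ 2
        + (1 - a ^ 2 - b ^ 2 - c ^ 2 - 2 * a * b * c) * x2 ^ 2 := by ring
  rcases eq_or_ne x2 0 with h2 | h2
  · rcases eq_or_ne x1 0 with h1 | h1
    · have h0 : x0 ≠ 0 := by tauto
      rw [h1, h2]
      nlinarith [sq_pos_of_ne_zero h0]
    · subst h2
      nlinarith [mul_pos (mul_pos ha2 ha2) (sq_pos_of_ne_zero h1),
        mul_nonneg ha2.le (sq_nonneg (x0 - a * x1)), ha2]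
  · nlinarith [sq_nonneg (x0 - a * x1 - b * x2),
      sq_nonneg ((1 - a ^ 2) * x1 - (c + a * b) * x2), key,
      mul_pos hD (sq_pos_of_ne_zero h2), mul_nonneg ha2.le (sq_nonneg (x0 - a * x1 - b * x2))]

/-- The Gram matrix of a triangle with angles π/k, π/l, π/m is positive definite
iff 1/k + 1/l + 1/m > 1 (spherical Coxeter triangles). -/
theorem spherical_triangle_gram_posDef_iff
    (k l m : ℕ) (hk : 2 ≤ k) (hl : 2 ≤ l) (hm : 2 ≤ m) :
    (!![(1 : ℝ), -Real.cos (π / k), -Real.cos (π / l);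
        -Real.cos (π / k), 1, -Real.cos (π / m);
        -Real.cos (π / l), -Real.cos (π / m), 1]).PosDef ↔
      1 < 1 / (k : ℝ) + 1 / (l : ℝ) + 1 / (m : ℝ) := by
  have hk' : (2 : ℝ) ≤ k := by exact_mod_cast hk
  have hl' : (2 : ℝ) ≤ l := by exact_mod_cast hl
  have hm' : (2 : ℝ) ≤ m := by exact_mod_cast hm
  have hkp : (0 : ℝ) < k := by linarith
  have hlp : (0 : ℝ) < l := by linarith
  have hmp : (0 : ℝ) < m := by linarith
  have hπ := Real.pi_pos
  have hα : 0 < π / k := div_pos hπ hkp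
  have hβ : 0 < π / l := div_pos hπ hlp
  have hγ : 0 < π / m := div_pos hπ hmp
  have hα2 : π / k ≤ π / 2 := div_le_div_of_nonneg_left hπ.le (by norm_num) hk'
  have hβ2 : π / l ≤ π / 2 := div_le_div_of_nonneg_left hπ.le (by norm_num) hl'
  have hγ2 : π / m ≤ π / 2 := div_le_div_of_nonneg_left hπ.le (by norm_num) hm'
  set a := Real.cos (π / k) with ha
  set b := Real.cos (π / l) with hb
  set c := Real.cos (π / m) with hc
  obtain ⟨ha0, ha1⟩ := cos_facts hα hα2
  obtain ⟨hb0, hb1⟩ := cos_facts hβ hβ2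
  obtain ⟨hc0, hc1⟩ := cos_facts hγ hγ2
  have hdet : (!![(1 : ℝ), -a, -b; -a, 1, -c; -b, -c, 1]).det
      = 1 - a ^ 2 - b ^ 2 - c ^ 2 - 2 * a * b * c := by
    simp [Matrix.det_fin_three]; ring
  have hsum : (π < π / k + π / l + π / m) ↔ 1 < 1 / (k : ℝ) + 1 / (l : ℝ) + 1 / (m : ℝ) := by
    have he : π / k + π / l + π / m = π * (1 / (k : ℝ) + 1 / (l : ℝ) + 1 / (m : ℝ)) := by
      field_simp
    rw [he, lt_mul_iff_one_lt_right hπ]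
  rw [← hsum, ← key_trig hα hα2 hβ hβ2 hγ hγ2, ← ha, ← hb, ← hc]
  constructor
  · intro hPD
    have := hPD.det_pos
    rw [hdet] at this
    linarith
  · intro hD
    rw [Matrix.posDef_iff_dotProduct_mulVec]
    constructor
    · unfold Matrix.IsHermitian
      ext i j
      fin_cases i <;> fin_cases j <;> simp [Matrix.conjTranspose_apply]
    · intro x hx
      have hx' : ¬ (x 0 = 0 ∧ x 1 = 0 ∧ x 2 = 0) := by
        intro ⟨h0, h1, h2⟩
        apply hx
        funext i
        fin_cases i <;> assumption
      have hQ : star x ⬝ᵥ (!![(1 : ℝ), -a, -b; -a, 1, -c; -b, -c, 1] *ᵥ x)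
          = x 0 ^ 2 + x 1 ^ 2 + x 2 ^ 2 - 2 * a * x 0 * x 1 - 2 * b * x 0 * x 2
            - 2 * c * x 1 * x 2 := by
        simp [dotProduct, Matrix.mulVec, Fin.sum_univ_three]
        ring
      rw [hQ]
      have ha2 : 0 < 1 - a ^ 2 := by nlinarith
      exact quad_pos ha2 hD hx'
end

section
/- For integers k, l, m ≥ 2, the determinant of the 3×3 symmetric matrix with ones on the diagonal and off-diagonal entries -cos(π/k), -cos(π/l), -cos(π/m) equals zero if and only if (k,l,m) is a permutation of (3,3,3), (2,4,4), or (2,3,6). -/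
open Matrix Real

private lemma real_iff (k l m : ℕ) (hk : 2 ≤ k) (hl : 2 ≤ l) (hm : 2 ≤ m) :
    1 - cos (π/k)^2 - cos (π/l)^2 - cos (π/m)^2
      - 2 * cos (π/k) * cos (π/l) * cos (π/m) = 0
    ↔ k * l * m = k * l + k * m + l * m := by
  have hπ := Real.pi_pos
  have hk0 : (0:ℝ) < k := by exact_mod_cast (by omega : 0 < k)
  have hl0 : (0:ℝ) < l := by exact_mod_cast (by omega : 0 < l)
  have hm0 : (0:ℝ) < m := by exact_mod_cast (by omega : 0 < m)
  have hk2 : (2:ℝ) ≤ k := by exact_mod_cast hk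
  have hl2 : (2:ℝ) ≤ l := by exact_mod_cast hl
  have hm2 : (2:ℝ) ≤ m := by exact_mod_cast hm
  have hα1 : 0 < π / k := by positivity
  have hβ1 : 0 < π / l := by positivity
  have hγ1 : 0 < π / m := by positivity
  have hα2 : π / k ≤ π / 2 := by
    apply div_le_div_of_nonneg_left hπ.le (by linarith) hk2
  have hβ2 : π / l ≤ π / 2 := by
    apply div_le_div_of_nonneg_left hπ.le (by linarith) hl2
  have hγ2 : π / m ≤ π / 2 := by
    apply div_le_div_of_nonneg_left hπ.le (by linarith) hm2
  have hS : 0 < sin (π/l) * sin (π/m) :=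
    mul_pos (sin_pos_of_pos_of_lt_pi hβ1 (by linarith))
      (sin_pos_of_pos_of_lt_pi hγ1 (by linarith))
  have ha0 : 0 ≤ cos (π/k) := Real.cos_nonneg_of_mem_Icc ⟨by linarith, hα2⟩
  have hb0 : 0 ≤ cos (π/l) := Real.cos_nonneg_of_mem_Icc ⟨by linarith, hβ2⟩
  have hc0 : 0 ≤ cos (π/m) := Real.cos_nonneg_of_mem_Icc ⟨by linarith, hγ2⟩
  have factor : 1 - cos (π/k)^2 - cos (π/l)^2 - cos (π/m)^2
      - 2 * cos (π/k) * cos (π/l) * cos (π/m)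
      = (sin (π/l) * sin (π/m) - (cos (π/k) + cos (π/l) * cos (π/m)))
        * (sin (π/l) * sin (π/m) + (cos (π/k) + cos (π/l) * cos (π/m))) := by
    have h1 := sin_sq_add_cos_sq (π/l)
    have h2 := sin_sq_add_cos_sq (π/m)
    linear_combination (-(sin (π/m))^2) * h1 + (cos (π/l)^2 - 1) * h2
  have hne : sin (π/l) * sin (π/m) + (cos (π/k) + cos (π/l) * cos (π/m)) ≠ 0 := by
    nlinarith [mul_nonneg hb0 hc0]
  have key : 1 - cos (π/k)^2 - cos (π/l)^2 - cos (π/m)^2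
      - 2 * cos (π/k) * cos (π/l) * cos (π/m) = 0
      ↔ π/k + π/l + π/m = π := by
    rw [factor, mul_eq_zero, or_iff_left hne, sub_eq_zero]
    constructor
    · intro hEq
      have hc : cos (π/k) = cos (π - (π/l + π/m)) := by
        rw [Real.cos_pi_sub, Real.cos_add]; linarith
      have := Real.injOn_cos ⟨by linarith, by linarith⟩
        ⟨by linarith, by linarith⟩ hc
      linarith
    · intro hsum
      have hα : π/k = π - (π/l + π/m) := by linarith
      rw [hα, Real.cos_pi_sub, Real.cos_add]; ring
  have hstep : π/k + π/l + π/m = π ↔ (1/(k:ℝ) + 1/l + 1/m) = 1 := by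
    rw [show π/(k:ℝ) + π/l + π/m = π * (1/k + 1/l + 1/m) by ring]
    constructor
    · intro h; exact mul_left_cancel₀ Real.pi_ne_zero (by rw [h, mul_one])
    · intro h; rw [h, mul_one]
  rw [key, hstep]
  rw [div_add_div _ _ hk0.ne' hl0.ne', div_add_div _ _ (by positivity) hm0.ne',
    div_eq_one_iff_eq (by positivity)]
  constructor
  · intro h
    have hcast : ((k*l*m : ℕ) : ℝ) = ((k*l + k*m + l*m : ℕ) : ℝ) := by
      push_cast; linarith
    exact_mod_cast hcast
  · intro h
    have hcast : ((k*l*m : ℕ) : ℝ) = ((k*l + k*m + l*m : ℕ) : ℝ) := by exact_mod_cast h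
    push_cast at hcast; linarith
private lemma bound6 (k l m : ℕ) (hl : 2 ≤ l) (hm : 2 ≤ m)
    (h : k * l * m = k * l + k * m + l * m) : k ≤ 6 := by
  by_contra hk
  push_neg at hk
  have hz : (k : ℤ) * l * m = k * l + k * m + l * m := by exact_mod_cast h
  have hk7 : (7 : ℤ) ≤ k := by exact_mod_cast hk
  have hl2 : (2 : ℤ) ≤ l := by exact_mod_cast hl
  have hm2 : (2 : ℤ) ≤ m := by exact_mod_cast hm
  rcases lt_or_ge 2 l with h3 | h2
  · have h3' : (3 : ℤ) ≤ l := by exact_mod_cast h3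
    have hA : (0:ℤ) ≤ ((k:ℤ) - 7) * (((l:ℤ) - 1) * ((m:ℤ) - 1) - 1) :=
      mul_nonneg (by linarith) (by nlinarith)
    have hB : (0:ℤ) ≤ ((l:ℤ) - 3) * ((m:ℤ) - 2) := mul_nonneg (by linarith) (by linarith)
    nlinarith [hA, hB]
  · have hl2' : l = 2 := by omega
    subst hl2'
    rcases lt_or_ge 2 m with h3 | h2'
    · have h3' : (3 : ℤ) ≤ m := by exact_mod_cast h3
      have hA : (5:ℤ) ≤ ((k:ℤ) - 2) * ((m:ℤ) - 2) := by nlinarith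
      nlinarith [hA]
    · have hm2' : m = 2 := by omega
      subst hm2'
      omega

private lemma nat_iff (k l m : ℕ) (hk : 2 ≤ k) (hl : 2 ≤ l) (hm : 2 ≤ m) :
    k * l * m = k * l + k * m + l * m ↔
      ({k, l, m} : Multiset ℕ) = {3, 3, 3} ∨
      ({k, l, m} : Multiset ℕ) = {2, 4, 4} ∨
      ({k, l, m} : Multiset ℕ) = {2, 3, 6} := by
  constructor
  · intro h
    have hk6 := bound6 k l m hl hm h
    have hl6 := bound6 l k m hk hm (by ring_nf at h ⊢; omega)
    have hm6 := bound6 m k l hk hl (by ring_nf at h ⊢; omega)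
    interval_cases k <;> interval_cases l <;> interval_cases m <;> revert h <;> decide
  · intro h
    have hb : ∀ x ∈ ({k, l, m} : Multiset ℕ), x ≤ 6 := by
      rcases h with h | h | h <;> rw [h] <;> decide
    have hk6 := hb k (by simp)
    have hl6 := hb l (by simp)
    have hm6 := hb m (by simp)
    interval_cases k <;> interval_cases l <;> interval_cases m <;> revert h <;> decide


/-- The determinant of the rank-3 Coxeter Gram matrix vanishes exactly for the
Euclidean triples (3,3,3), (2,4,4), (2,3,6) (up to permutation). -/
theorem euclidean_triangle_det_zero_iff
    (k l m : ℕ) (hk : 2 ≤ k) (hl : 2 ≤ l) (hm : 2 ≤ m) :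
    (!![(1 : ℝ), -Real.cos (π / k), -Real.cos (π / l);
        -Real.cos (π / k), 1, -Real.cos (π / m);
        -Real.cos (π / l), -Real.cos (π / m), 1]).det = 0 ↔
      ({k, l, m} : Multiset ℕ) = {3, 3, 3} ∨
      ({k, l, m} : Multiset ℕ) = {2, 4, 4} ∨
      ({k, l, m} : Multiset ℕ) = {2, 3, 6} := by
  have hdet : (!![(1 : ℝ), -Real.cos (π / k), -Real.cos (π / l);
        -Real.cos (π / k), 1, -Real.cos (π / m);
        -Real.cos (π / l), -Real.cos (π / m), 1]).det
      = 1 - cos (π/k)^2 - cos (π/l)^2 - cos (π/m)^2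
        - 2 * cos (π/k) * cos (π/l) * cos (π/m) := by
    simp [Matrix.det_fin_three]; ring
  rw [hdet, real_iff k l m hk hl hm, nat_iff k l m hk hl hm]
end

section
/- Let G be the 4×4 symmetric matrix with ones on the diagonal, G_{12} = −cos(π/5), G_{23} = −1/2, G_{34} = −cos(π/5), and all other off-diagonal entries 0. Then det G < 0, so G is not positive definite and not positive semidefinite. -/
open Matrix Real

/-- The Gram matrix of the Lannér diagram 5−3−5 has negative determinant, hence is
neither positive definite nor positive semidefinite. -/
theorem lanner_535_not_posDef :
    (!![(1 : ℝ), -Real.cos (π / 5), 0, 0;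
        -Real.cos (π / 5), 1, -1/2, 0;
        0, -1/2, 1, -Real.cos (π / 5);
        0, 0, -Real.cos (π / 5), 1]).det < 0 ∧
    ¬ (!![(1 : ℝ), -Real.cos (π / 5), 0, 0;
        -Real.cos (π / 5), 1, -1/2, 0;
        0, -1/2, 1, -Real.cos (π / 5);
        0, 0, -Real.cos (π / 5), 1]).PosDef ∧
    ¬ (!![(1 : ℝ), -Real.cos (π / 5), 0, 0;
        -Real.cos (π / 5), 1, -1/2, 0;
        0, -1/2, 1, -Real.cos (π / 5);
        0, 0, -Real.cos (π / 5), 1]).PosSemidef := by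
  have hs : Real.sqrt 5 ^ 2 = 5 := Real.sq_sqrt (by norm_num)
  have hs' : (2:ℝ) < Real.sqrt 5 := by
    nlinarith [Real.sqrt_nonneg 5]
  have hdet : (!![(1 : ℝ), -Real.cos (π / 5), 0, 0;
        -Real.cos (π / 5), 1, -1/2, 0;
        0, -1/2, 1, -Real.cos (π / 5);
        0, 0, -Real.cos (π / 5), 1]).det < 0 := by
    rw [Real.cos_pi_div_five]
    simp only [Matrix.det_succ_row_zero, Fin.sum_univ_succ, Fin.sum_univ_zero]
    simp [Matrix.submatrix, Matrix.vecHead, Matrix.vecTail, Fin.succAbove, Fin.lt_def]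
    norm_num
    nlinarith [hs, hs']
  refine ⟨hdet, fun h => absurd h.det_pos (by linarith), fun h => ?_⟩
  have : (0:ℝ) ≤ (!![(1 : ℝ), -Real.cos (π / 5), 0, 0;
        -Real.cos (π / 5), 1, -1/2, 0;
        0, -1/2, 1, -Real.cos (π / 5);
        0, 0, -Real.cos (π / 5), 1]).det := by
    exact h.det_nonneg
  linarith
end

section
/- Let G be the 5×5 symmetric matrix with ones on the diagonal, G_{12} = −cos(π/5), G_{23} = G_{34} = G_{45} = −1/2, and all other off-diagonal entries 0 (the Coxeter diagram H₄ extended, i.e., the diagram 5−3−3−3). Then G has signature (4,1): four positive eigenvalues and one negative eigenvalue. -/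
open Matrix Real

private lemma lanner_eig_lt {A : Matrix (Fin 5) (Fin 5) ℝ}
    (hA : A = !![(1 : ℝ), -Real.cos (π / 5), 0, 0, 0;
        -Real.cos (π / 5), 1, -1/2, 0, 0;
        0, -1/2, 1, -1/2, 0;
        0, 0, -1/2, 1, -1/2;
        0, 0, 0, -1/2, 1]) {μ : ℝ}
    (hμ : Module.End.HasEigenvalue (Matrix.toLin' A) μ) : μ < 5/2 := by
  have hc : Real.cos (π/5) = (1 + √5)/4 := Real.cos_pi_div_five
  have h5 : √5 < 3 := by
    nlinarith [Real.sq_sqrt (by norm_num : (5:ℝ) ≥ 0), Real.sqrt_nonneg 5]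
  have h5' : (0:ℝ) ≤ √5 := Real.sqrt_nonneg 5
  have hrow : ∀ k, ∑ j, ‖A k j‖ < 5/2 := by
    intro k
    fin_cases k <;>
    · simp [hA, Fin.sum_univ_five, Matrix.vecHead, Matrix.vecTail, Real.norm_eq_abs,
        hc, abs_div, abs_neg, abs_one,
        abs_of_nonneg (show (0:ℝ) ≤ (1+√5)/4 by positivity)]
      norm_num
      try linarith
  obtain ⟨k, hk⟩ := eigenvalue_mem_ball hμ
  rw [Metric.mem_closedBall, Real.dist_eq] at hk
  have h1 : μ - A k k ≤ ∑ j ∈ Finset.univ.erase k, ‖A k j‖ := le_trans (le_abs_self _) hk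
  have h2 : ‖A k k‖ + ∑ j ∈ Finset.univ.erase k, ‖A k j‖ = ∑ j, ‖A k j‖ :=
    Finset.add_sum_erase _ (fun j => ‖A k j‖) (Finset.mem_univ k)
  have h3 : A k k ≤ ‖A k k‖ := le_abs_self _
  have := hrow k
  linarith

/-- The Gram matrix of the Lannér diagram 5−3−3−3 (compact hyperbolic Coxeter
4-simplex) has signature (4,1): four positive and one negative eigenvalue. -/
theorem lanner_5333_signature :
    ∃ hM : (!![(1 : ℝ), -Real.cos (π / 5), 0, 0, 0;
        -Real.cos (π / 5), 1, -1/2, 0, 0;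
        0, -1/2, 1, -1/2, 0;
        0, 0, -1/2, 1, -1/2;
        0, 0, 0, -1/2, 1]).IsHermitian,
      {i | hM.eigenvalues i < 0}.ncard = 1 ∧
      {i | 0 < hM.eigenvalues i}.ncard = 4 := by
  classical
  set A := !![(1 : ℝ), -Real.cos (π / 5), 0, 0, 0;
        -Real.cos (π / 5), 1, -1/2, 0, 0;
        0, -1/2, 1, -1/2, 0;
        0, 0, -1/2, 1, -1/2;
        0, 0, 0, -1/2, 1] with hA
  have hM : A.IsHermitian := by
    unfold Matrix.IsHermitian
    ext i j
    fin_cases i <;> fin_cases j <;> simp [hA, Matrix.vecHead, Matrix.vecTail]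
  refine ⟨hM, ?_⟩
  set lam := hM.eigenvalues with hlam
  -- eigenvalues are less than 5/2
  have hub : ∀ i, lam i < 5/2 := by
    intro i
    apply lanner_eig_lt hA
    apply Module.End.hasEigenvalue_of_hasEigenvector
      (x := (hM.eigenvectorBasis i : Fin 5 → ℝ))
    constructor
    · rw [Module.End.mem_eigenspace_iff]
      show Matrix.toLin' A ⇑(hM.eigenvectorBasis i) = _
      rw [Matrix.toLin'_apply]
      exact hM.mulVec_eigenvectorBasis i
    · intro h
      exact hM.eigenvectorBasis.orthonormal.ne_zero i (by ext j; exact congrFun h j)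
  -- determinant is negative
  have hc : Real.cos (π/5) = (1 + √5)/4 := Real.cos_pi_div_five
  have h5 : (√5)^2 = 5 := Real.sq_sqrt (by norm_num)
  have h5' : (2:ℝ) < √5 := by nlinarith [Real.sqrt_nonneg 5]
  have hdet : A.det < 0 := by
    have : A.det = 5/16 - (Real.cos (π/5))^2/2 := by
      rw [hA]
      simp [Matrix.det_succ_row_zero, Fin.sum_univ_succ, Fin.succAbove,
        Matrix.vecHead, Matrix.vecTail]
      ring
    rw [this, hc]
    nlinarith
  have hprod : ∏ i, lam i < 0 := by
    have h : A.det = ∏ i, lam i := by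
      rw [hM.det_eq_prod_eigenvalues]; norm_num; rfl
    rwa [h] at hdet
  -- trace is 5
  have hsum : ∑ i, lam i = 5 := by
    have h1 : A.trace = ∑ i, lam i := by
      nth_rewrite 1 [hM.spectral_theorem]
      rw [Unitary.conjStarAlgAut_apply, Matrix.trace_mul_cycle, Unitary.coe_star_mul_self, one_mul]
      simp [Matrix.trace_diagonal]
      rfl
    have h2 : A.trace = 5 := by
      rw [hA]
      simp [Matrix.trace, Matrix.diag, Fin.sum_univ_five, Matrix.vecHead, Matrix.vecTail]
      norm_num
    rw [← h1, h2]
  -- no zero eigenvalue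
  have hnz : ∀ i, lam i ≠ 0 := by
    intro i h
    rw [Finset.prod_eq_zero (Finset.mem_univ i) h] at hprod
    exact lt_irrefl 0 hprod
  -- counting
  set N := Finset.univ.filter (fun i => lam i < 0) with hN
  set P := Finset.univ.filter (fun i => ¬ lam i < 0) with hP
  have hPpos : ∀ i ∈ P, 0 < lam i := by
    intro i hi
    rw [hP, Finset.mem_filter] at hi
    exact lt_of_le_of_ne (not_lt.mp hi.2) (Ne.symm (hnz i))
  have hNneg : ∀ i ∈ N, lam i < 0 := by
    intro i hi; rw [hN, Finset.mem_filter] at hi; exact hi.2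
  have hcards : N.card + P.card = 5 := by
    rw [hN, hP, Finset.card_filter_add_card_filter_not]
    simp
  have hNprod : ∏ i ∈ N, lam i < 0 := by
    have hsplit : (∏ i ∈ N, lam i) * ∏ i ∈ P, lam i = ∏ i, lam i :=
      Finset.prod_filter_mul_prod_filter_not _ _ _
    have hPprod : 0 < ∏ i ∈ P, lam i := Finset.prod_pos hPpos
    nlinarith
  have hNodd : ¬ Even N.card := by
    intro he
    have h1 : ∏ i ∈ N, lam i = (-1)^N.card * ∏ i ∈ N, (-(lam i)) := by
      rw [← Finset.prod_const, ← Finset.prod_mul_distrib]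
      simp
    have h2 : 0 < ∏ i ∈ N, (-(lam i)) :=
      Finset.prod_pos fun i hi => neg_pos.mpr (hNneg i hi)
    rw [he.neg_one_pow, one_mul] at h1
    rw [h1] at hNprod
    exact lt_irrefl _ (hNprod.trans h2)
  have hNle : N.card ≤ 2 := by
    by_contra hgt
    push_neg at hgt
    have hNne : N.Nonempty := Finset.card_pos.mp (by omega)
    have hNsum : ∑ i ∈ N, lam i < 0 := Finset.sum_neg hNneg hNne
    have hPsum : ∑ i ∈ P, lam i ≤ P.card * (5/2) := by
      have := Finset.sum_le_card_nsmul P lam (5/2) (fun i _ => le_of_lt (hub i))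
      simpa [nsmul_eq_mul] using this
    have hPcard : P.card ≤ 2 := by omega
    have hsplit : (∑ i ∈ N, lam i) + ∑ i ∈ P, lam i = ∑ i, lam i :=
      Finset.sum_filter_add_sum_filter_not _ _ _
    have : (P.card : ℝ) ≤ 2 := by exact_mod_cast hPcard
    nlinarith
  have hN1 : N.card = 1 := by
    interval_cases h : N.card <;> simp_all (config := {decide := true})
  have hP4 : P.card = 4 := by omega
  constructor
  · have : {i | lam i < 0} = ↑N := by
      ext i; simp [hN]
    rw [this, Set.ncard_coe_finset, hN1]
  · have : {i | 0 < lam i} = ↑P := by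
      ext i
      simp only [hP, Finset.coe_filter, Finset.mem_univ, true_and, Set.mem_setOf_eq, not_lt]
      exact ⟨le_of_lt, fun h => lt_of_le_of_ne h (Ne.symm (hnz i))⟩
    rw [this, Set.ncard_coe_finset, hP4]
end

section
/- The system of equations and inequalities: −2 + 5x − 3x² − √2·h + √2·x·h − 2x·h² + 2x²·h² = 0, −4 + 10x − 6x² + h² − 3x·h² + 2x²·h² = 0, with x < −1 and 1.8 < h < 2, has no solution (x, h) such that h = 2·cos(π/n) for some integer n ≥ 7. -/
open Real

/-- The minor equations of the last Gram-matrix candidate for the polytope P₁₇ have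
no solution with x < −1 and h = 2cos(π/n) for an integer n ≥ 7. -/
theorem P17_final_case_no_solution :
    ¬ ∃ x h : ℝ,
      -2 + 5 * x - 3 * x ^ 2 - Real.sqrt 2 * h + Real.sqrt 2 * x * h
        - 2 * x * h ^ 2 + 2 * x ^ 2 * h ^ 2 = 0 ∧
      -4 + 10 * x - 6 * x ^ 2 + h ^ 2 - 3 * x * h ^ 2 + 2 * x ^ 2 * h ^ 2 = 0 ∧
      x < -1 ∧ 1.8 < h ∧ h < 2 ∧
      ∃ n : ℕ, 7 ≤ n ∧ h = 2 * Real.cos (π / n) := by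
  rintro ⟨x, h, e1, e2, hx, hh1, hh2, n, hn7, hhn⟩
  have hs2 : Real.sqrt 2 ^ 2 = 2 := Real.sq_sqrt (by norm_num)
  have hs0 : (0 : ℝ) ≤ Real.sqrt 2 := Real.sqrt_nonneg 2
  obtain ⟨s, hs_def⟩ : ∃ s : ℝ, Real.sqrt 2 = s := ⟨_, rfl⟩
  rw [hs_def] at e1 hs2 hs0
  have hs_gt : 1.41421 < s := by nlinarith
  have hs_lt : s < 1.41422 := by nlinarith
  -- Step A: eliminate the sqrt-linear part
  have key : h * (1 - x) * ((1 + 2 * x) * h + 2 * s) = 0 := by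
    linear_combination e2 - 2 * e1
  have hh0 : h ≠ 0 := by intro h0; rw [h0] at hh1; norm_num at hh1
  have hx1 : (1 : ℝ) - x ≠ 0 := by intro h0; nlinarith
  have hA : (1 + 2 * x) * h + 2 * s = 0 := by
    rcases mul_eq_zero.mp key with key' | hA
    · rcases mul_eq_zero.mp key' with h0 | h1
      · exact absurd h0 hh0
      · exact absurd h1 hx1
    · exact hA
  -- Step B: factor the second equation
  have keyB : (x - 1) * ((2 * x - 1) * h ^ 2 - (6 * x - 4)) = 0 := by
    linear_combination e2
  have hB : (2 * x - 1) * h ^ 2 - (6 * x - 4) = 0 := by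
    rcases mul_eq_zero.mp keyB with h1 | hB
    · exact absurd h1 (by intro h'; nlinarith)
    · exact hB
  -- Step C: the cubic for h
  have hC : 2 * h ^ 3 + 2 * s * h ^ 2 - 7 * h - 6 * s = 0 := by
    linear_combination (h ^ 2 - 3) * hA - h * hB
  clear e1 e2 key keyB hA hB hx1 hh0 hx hs_def
  -- Split on n
  rcases Nat.lt_or_ge n 8 with h8 | h8
  · -- n = 7
    have hn : n = 7 := by omega
    subst hn
    have hhc : h = 2 * Real.cos (π / 7) := by rw [hhn]; norm_num
    clear hhn h8 hn7
    obtain ⟨c, hc_def⟩ : ∃ c : ℝ, Real.cos (π / 7) = c := ⟨_, rfl⟩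
    rw [hc_def] at hhc
    have hc_lb : 0.9 < c := by nlinarith
    have hc_ub : c < 1 := by nlinarith
    -- minimal cubic of cos(π/7)
    have e4 : Real.cos (4 * (π / 7)) = 2 * (2 * c ^ 2 - 1) ^ 2 - 1 := by
      rw [show 4 * (π / 7) = 2 * (2 * (π / 7)) by ring, Real.cos_two_mul,
        Real.cos_two_mul, hc_def]
    have e3 : Real.cos (3 * (π / 7)) = 4 * c ^ 3 - 3 * c := by
      rw [Real.cos_three_mul, hc_def]
    have hq : Real.cos (4 * (π / 7)) = -Real.cos (3 * (π / 7)) := by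
      rw [show 4 * (π / 7) = π - 3 * (π / 7) by ring, Real.cos_pi_sub]
    rw [e4, e3] at hq
    clear e4 e3 hc_def
    have hcu : 8 * c ^ 3 - 4 * c ^ 2 - 4 * c + 1 = 0 := by
      have hfac : (c + 1) * (8 * c ^ 3 - 4 * c ^ 2 - 4 * c + 1) = 0 := by
        linear_combination hq
      rcases mul_eq_zero.mp hfac with h1 | h2
      · nlinarith
      · exact h2
    -- cubic for h in terms of c
    have hf : 16 * c ^ 3 + 8 * s * c ^ 2 - 14 * c - 6 * s = 0 := by
      rw [hhc] at hC; linear_combination hC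
    -- eliminate
    have hg : (8 + 8 * s) * c ^ 2 - 6 * c - 2 - 6 * s = 0 := by
      linear_combination hf - 2 * hcu
    have hq2 : (4 * s - 2) * c ^ 2 + (2 - 2 * s) * c - 1 - s = 0 := by
      linear_combination c * hg - (1 + s) * hcu
    have h28 : (28 - 24 * s) * c = 20 - 20 * s := by
      linear_combination (4 * s - 2) * hg - (8 + 8 * s) * hq2 + (16 - 16 * c) * hs2
    have hneg : 28 - 24 * s < 0 := by linarith
    have hlt : (28 - 24 * s) * 1 < (28 - 24 * s) * c :=
      mul_lt_mul_of_neg_left hc_ub hneg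
    rw [h28, mul_one] at hlt
    linarith
  · -- n ≥ 8 : h ≥ √(2+√2) > 1.8477
    have hmono : Real.cos (π / 8) ≤ Real.cos (π / n) := by
      apply Real.cos_le_cos_of_nonneg_of_le_pi
      · positivity
      · have : π / 8 ≤ π := by nlinarith [Real.pi_pos]
        linarith
      · apply div_le_div_of_nonneg_left Real.pi_pos.le (by norm_num)
        exact_mod_cast h8
    rw [Real.cos_pi_div_eight] at hmono
    have hsq : Real.sqrt (2 + Real.sqrt 2) > 1.8477 := by
      have h1 : (2 : ℝ) + Real.sqrt 2 > 3.41421 := by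
        nlinarith [Real.sq_sqrt (show (0:ℝ) ≤ 2 by norm_num), Real.sqrt_nonneg 2]
      nlinarith [Real.sq_sqrt (show (0:ℝ) ≤ 2 + Real.sqrt 2 by positivity),
        Real.sqrt_nonneg (2 + Real.sqrt 2)]
    have hhb : 1.8477 < h := by
      rw [hhn]; linarith
    nlinarith [hC, sq_nonneg (h - 1.85), sq_nonneg (h - 1.8477)]
end
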